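/- Let I ⊆ P be a monomial ideal with minimal monomial generating set {t₁,…,t_s} (the monomials tᵢ generate I and none divides another), let π = (π₁,…,πₙ) where each πᵢ is a sequence of pairwise distinct elements of K, and let D_π(I) = ⟨D_π(t₁),…,D_π(t_s)⟩ be the distraction of I. Then D_π(I) is a radical ideal of P. -/

import Mathlib

open MvPolynomial

/-- The distraction `∏ᵢ ∏_{j<αᵢ} (Xᵢ - c i j)` of the monomial with exponent vector `α`. -/
noncomputable def distraction {n : ℕ} {K : Type*} [Field K]
    (c : Fin n → ℕ → K) (α : Fin n →₀ ℕ) : MvPolynomial (Fin n) K :=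
  ∏ i : Fin n, ∏ j ∈ Finset.range (α i), (X i - C (c i j))

/-- Expansion of a product of linear factors: leading part plus lower order terms. -/
lemma prod_linear_expand {n : ℕ} {K : Type*} [Field K] {ι : Type*}
    (v : ι → Fin n) (d : ι → K) (s : Finset ι) :
    ∃ r : MvPolynomial (Fin n) K,
      (∏ k ∈ s, (X (v k) - C (d k))) = (∏ k ∈ s, (X (v k) : MvPolynomial (Fin n) K)) + r ∧
      (r = 0 ∨ r.totalDegree < s.card) := by
  classical
  induction s using Finset.induction_on with
  | empty => exact ⟨0, by simp⟩
  | @insert a s ha ih =>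
    obtain ⟨r, hr, hd⟩ := ih
    refine ⟨X (v a) * r - C (d a) * ((∏ k ∈ s, (X (v k) : MvPolynomial (Fin n) K)) + r), ?_, ?_⟩
    · rw [Finset.prod_insert ha, Finset.prod_insert ha, hr]; ring
    · right
      have hcard : (insert a s).card = s.card + 1 := Finset.card_insert_of_notMem ha
      rw [hcard]
      have h1 : (X (v a) * r).totalDegree < s.card + 1 := by
        rcases hd with h | h
        · simp [h, Nat.succ_pos]
        · calc (X (v a) * r).totalDegree ≤ (X (v a) : MvPolynomial (Fin n) K).totalDegree
                + r.totalDegree := totalDegree_mul _ _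
            _ ≤ 1 + r.totalDegree := by gcongr; exact (totalDegree_X _).le
            _ < 1 + s.card := by omega
            _ = s.card + 1 := by omega
      have h2 : (C (d a) * ((∏ k ∈ s, (X (v k) : MvPolynomial (Fin n) K)) + r)).totalDegree
          < s.card + 1 := by
        have hP : (∏ k ∈ s, (X (v k) : MvPolynomial (Fin n) K)).totalDegree ≤ s.card := by
          calc (∏ k ∈ s, (X (v k) : MvPolynomial (Fin n) K)).totalDegree
              ≤ ∑ k ∈ s, (X (v k) : MvPolynomial (Fin n) K).totalDegree :=
                totalDegree_finset_prod _ _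
            _ ≤ ∑ k ∈ s, 1 := by gcongr with k hk; exact (totalDegree_X _).le
            _ = s.card := by simp
        have hs : ((∏ k ∈ s, (X (v k) : MvPolynomial (Fin n) K)) + r).totalDegree ≤ s.card := by
          refine (totalDegree_add _ _).trans ?_
          rcases hd with h | h
          · simp [h, hP]
          · exact max_le hP h.le
        calc (C (d a) * ((∏ k ∈ s, (X (v k) : MvPolynomial (Fin n) K)) + r)).totalDegree
            ≤ (C (d a) : MvPolynomial (Fin n) K).totalDegree
              + ((∏ k ∈ s, (X (v k) : MvPolynomial (Fin n) K)) + r).totalDegree :=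
              totalDegree_mul _ _
          _ ≤ 0 + s.card := by gcongr; exact (totalDegree_C _).le
          _ < s.card + 1 := by omega
      calc (X (v a) * r - C (d a) * ((∏ k ∈ s, (X (v k) : MvPolynomial (Fin n) K)) + r)).totalDegree
          ≤ max (X (v a) * r).totalDegree
            (C (d a) * ((∏ k ∈ s, (X (v k) : MvPolynomial (Fin n) K)) + r)).totalDegree := by
            rw [sub_eq_add_neg]
            exact (totalDegree_add _ _).trans (by rw [totalDegree_neg])
        _ < s.card + 1 := max_lt h1 h2

/-- The distraction of `α` is `monomial α 1` plus lower-order terms. -/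
lemma distraction_expand {n : ℕ} {K : Type*} [Field K]
    (c : Fin n → ℕ → K) (α : Fin n →₀ ℕ) :
    ∃ r : MvPolynomial (Fin n) K,
      distraction c α = monomial α 1 + r ∧ (r = 0 ∨ r.totalDegree < α.sum fun _ e => e) := by
  classical
  have hsig := Finset.prod_sigma' (Finset.univ : Finset (Fin n))
    (fun i => Finset.range (α i)) (fun i j => (X i - C (c i j) : MvPolynomial (Fin n) K))
  obtain ⟨r, hr, hd⟩ := prod_linear_expand (fun p : Σ _ : Fin n, ℕ => p.1)
    (fun p : Σ _ : Fin n, ℕ => c p.1 p.2)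
    ((Finset.univ : Finset (Fin n)).sigma (fun i => Finset.range (α i)))
  have hX : (∏ p ∈ (Finset.univ : Finset (Fin n)).sigma (fun i => Finset.range (α i)),
      (X p.1 : MvPolynomial (Fin n) K)) = monomial α 1 := by
    rw [← Finset.prod_sigma' (Finset.univ : Finset (Fin n))
      (fun i => Finset.range (α i)) (fun i _ => (X i : MvPolynomial (Fin n) K))]
    have : ∀ i : Fin n, (∏ _j ∈ Finset.range (α i), (X i : MvPolynomial (Fin n) K))
        = X i ^ α i := by intro i; rw [Finset.prod_const, Finset.card_range]
    rw [Finset.prod_congr rfl (fun i _ => this i)]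
    rw [← prod_X_pow_eq_monomial]
    exact (Finset.prod_subset (Finset.subset_univ _) (fun i _ hi => by
      simp [Finsupp.notMem_support_iff.mp hi])).symm
  have hcard : ((Finset.univ : Finset (Fin n)).sigma (fun i => Finset.range (α i))).card
      = α.sum fun _ e => e := by
    rw [Finset.card_sigma]
    simp only [Finset.card_range]
    rw [Finsupp.sum]
    exact (Finset.sum_subset (Finset.subset_univ _) (fun i _ hi => by
      simp [Finsupp.notMem_support_iff.mp hi])).symm
  refine ⟨r, ?_, ?_⟩
  · rw [distraction, hsig, hr, hX]
  · rwa [hcard] at hd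

/-- Every polynomial is in the `K`-span of the distractions of monomials. -/
lemma mem_span_distraction {n : ℕ} {K : Type*} [Field K]
    (c : Fin n → ℕ → K) (f : MvPolynomial (Fin n) K) :
    f ∈ Submodule.span K (Set.range (distraction c)) := by
  classical
  suffices h : ∀ N : ℕ, ∀ f : MvPolynomial (Fin n) K, f.totalDegree ≤ N →
      f ∈ Submodule.span K (Set.range (distraction c)) from h _ f le_rfl
  intro N
  induction N using Nat.strong_induction_on with
  | _ N ih =>
    intro f hf
    rw [f.as_sum]
    refine Submodule.sum_mem _ (fun α hα => ?_)
    have hαd : (α.sum fun _ e => e) ≤ N := le_trans (le_totalDegree hα) hf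
    obtain ⟨r, hr, hd⟩ := distraction_expand c α
    have hm : (monomial α (1 : K)) ∈ Submodule.span K (Set.range (distraction c)) := by
      have : (monomial α (1 : K)) = distraction c α - r := by rw [hr]; ring
      rw [this]
      refine Submodule.sub_mem _ (Submodule.subset_span ⟨α, rfl⟩) ?_
      rcases hd with h | h
      · simp [h]
      · exact ih r.totalDegree (lt_of_lt_of_le h hαd) r le_rfl
    have : (monomial α (coeff α f)) = coeff α f • monomial α (1 : K) := by
      rw [smul_monomial, smul_eq_mul, mul_one]
    rw [this]
    exact Submodule.smul_mem _ _ hm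

lemma eval_distraction {n : ℕ} {K : Type*} [Field K]
    (c : Fin n → ℕ → K) (α b : Fin n →₀ ℕ) :
    eval (fun i => c i (b i)) (distraction c α)
      = ∏ i : Fin n, ∏ j ∈ Finset.range (α i), (c i (b i) - c i j) := by
  simp [distraction]

lemma eval_distraction_eq_zero {n : ℕ} {K : Type*} [Field K]
    (c : Fin n → ℕ → K) {α b : Fin n →₀ ℕ} (h : ¬ α ≤ b) :
    eval (fun i => c i (b i)) (distraction c α) = 0 := by
  rw [eval_distraction]
  rw [Finsupp.le_def] at h
  push_neg at h
  obtain ⟨i, hi⟩ := h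
  refine Finset.prod_eq_zero (Finset.mem_univ i) ?_
  exact Finset.prod_eq_zero (Finset.mem_range.mpr hi) (by ring)

lemma eval_distraction_ne_zero {n : ℕ} {K : Type*} [Field K]
    {c : Fin n → ℕ → K} (hc : ∀ i, Function.Injective (c i))
    {α b : Fin n →₀ ℕ} (h : α ≤ b) :
    eval (fun i => c i (b i)) (distraction c α) ≠ 0 := by
  rw [eval_distraction]
  rw [Finset.prod_ne_zero_iff]
  intro i _
  rw [Finset.prod_ne_zero_iff]
  intro j hj
  rw [Finset.mem_range] at hj
  have hjb : j ≠ b i := by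
    have := Finsupp.le_def.mp h i
    omega
  intro hz
  exact hjb ((hc i (sub_eq_zero.mp hz)).symm)

lemma distraction_dvd {n : ℕ} {K : Type*} [Field K]
    (c : Fin n → ℕ → K) {t α : Fin n →₀ ℕ} (h : t ≤ α) :
    distraction c t ∣ distraction c α := by
  refine Finset.prod_dvd_prod_of_dvd _ _ (fun i _ => ?_)
  exact Finset.prod_dvd_prod_of_subset _ _ _
    (Finset.range_subset_range.mpr (Finsupp.le_def.mp h i))

/-- The distraction of a monomial ideal (with respect to sequences of pairwise distinct
elements of `K`) is a radical ideal. -/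
theorem distraction_isRadical
    {n : ℕ} {K : Type*} [Field K]
    (T : Finset (Fin n →₀ ℕ))
    (I : Ideal (MvPolynomial (Fin n) K))
    (hgen : I = Ideal.span ((fun t => monomial t (1 : K)) '' (T : Set (Fin n →₀ ℕ))))
    (hmin : ∀ t ∈ T, ∀ t' ∈ T, t ≠ t' → ¬ t ≤ t')
    (c : Fin n → ℕ → K) (hc : ∀ i, Function.Injective (c i)) :
    (Ideal.span ((distraction c) '' (T : Set (Fin n →₀ ℕ)))).IsRadical := by
  classical
  set J : Ideal (MvPolynomial (Fin n) K) :=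
    Ideal.span ((distraction c) '' (T : Set (Fin n →₀ ℕ))) with hJ
  -- membership in J implies vanishing at the "outside" points
  have hvanish : ∀ f ∈ J, ∀ b : Fin n →₀ ℕ, (∀ t ∈ T, ¬ t ≤ b) →
      eval (fun i => c i (b i)) f = 0 := by
    intro f hf b hb
    have hker : J ≤ RingHom.ker (eval (fun i => c i (b i)) :
        MvPolynomial (Fin n) K →+* K) := by
      rw [hJ, Ideal.span_le]
      rintro _ ⟨t, ht, rfl⟩
      exact eval_distraction_eq_zero c (hb t ht)
    exact hker hf
  -- vanishing at all outside points implies membership in J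
  have hmem : ∀ f : MvPolynomial (Fin n) K,
      (∀ b : Fin n →₀ ℕ, (∀ t ∈ T, ¬ t ≤ b) → eval (fun i => c i (b i)) f = 0) →
      f ∈ J := by
    intro f hf
    obtain ⟨l, hl⟩ := Finsupp.mem_span_range_iff_exists_finsupp.mp (mem_span_distraction c f)
    rw [Finsupp.sum] at hl
    set P : (Fin n →₀ ℕ) → Prop := fun α => ∃ t ∈ T, t ≤ α with hP
    have hsplit := Finset.sum_filter_add_sum_filter_not l.support P
      (fun α => l α • distraction c α)
    -- the part supported on P lies in J
    have hg1 : (∑ α ∈ l.support.filter P, l α • distraction c α) ∈ J := by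
      refine Submodule.sum_mem _ (fun α hα => ?_)
      obtain ⟨t, ht, htα⟩ := (Finset.mem_filter.mp hα).2
      obtain ⟨g, hg⟩ := distraction_dvd c htα
      rw [smul_eq_C_mul, hg]
      exact Ideal.mul_mem_left _ _
        (Ideal.mul_mem_right _ _ (Ideal.subset_span (Set.mem_image_of_mem _ ht)))
    -- the part outside P is zero
    have hg2 : l.support.filter (fun α => ¬ P α) = ∅ := by
      by_contra hne
      obtain ⟨α₀, hα₀, hmin₀⟩ : ∃ α₀ ∈ l.support.filter (fun α => ¬ P α),
          ∀ x ∈ l.support.filter (fun α => ¬ P α), ¬ x < α₀ := by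
        obtain ⟨m, hm⟩ := Finset.exists_minimal (Finset.nonempty_of_ne_empty hne)
        exact ⟨m, hm.1, fun x hx hlt => hlt.not_ge (hm.2 hx hlt.le)⟩
      have hα₀s := Finset.mem_filter.mp hα₀
      have hout : ∀ t ∈ T, ¬ t ≤ α₀ := by
        intro t ht htle
        exact hα₀s.2 ⟨t, ht, htle⟩
      have hfz := hf α₀ hout
      have hg1z : eval (fun i => c i (α₀ i))
          (∑ α ∈ l.support.filter P, l α • distraction c α) = 0 := by
        rw [map_sum]
        refine Finset.sum_eq_zero (fun α hα => ?_)
        obtain ⟨t, ht, htα⟩ := (Finset.mem_filter.mp hα).2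
        have : ¬ α ≤ α₀ := fun hle => hout t ht (le_trans htα hle)
        rw [smul_eq_C_mul, map_mul, eval_distraction_eq_zero c this, mul_zero]
      have hg2z : eval (fun i => c i (α₀ i))
          (∑ α ∈ l.support.filter (fun α => ¬ P α), l α • distraction c α) = 0 := by
        have hsum := congrArg (eval (fun i => c i (α₀ i))) hl
        rw [← hsplit, map_add, hg1z, zero_add] at hsum
        rw [hsum]
        exact hfz
      rw [map_sum, Finset.sum_eq_single α₀] at hg2z
      · rw [smul_eq_C_mul, map_mul, eval_C, mul_eq_zero] at hg2z
        rcases hg2z with h | h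
        · exact (Finsupp.mem_support_iff.mp hα₀s.1) h
        · exact eval_distraction_ne_zero hc le_rfl h
      · intro α hα hne'
        have hnle : ¬ α ≤ α₀ := fun hle => (hmin₀ α hα) (lt_of_le_of_ne hle hne')
        rw [smul_eq_C_mul, map_mul, eval_distraction_eq_zero c hnle, mul_zero]
      · intro h; exact absurd hα₀ h
    have : f = ∑ α ∈ l.support.filter P, l α • distraction c α := by
      rw [← hl, ← hsplit, hg2, Finset.sum_empty, add_zero]
    rw [this]
    exact hg1
  -- conclude radicality
  intro f hf
  rw [Ideal.mem_radical_iff] at hf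
  obtain ⟨m, hm⟩ := hf
  refine hmem f (fun b hb => ?_)
  have := hvanish _ hm b hb
  rw [map_pow] at this
  have hm0 : m ≠ 0 := by
    rintro rfl
    rw [pow_zero] at this
    exact one_ne_zero this
  exact pow_eq_zero_iff hm0 |>.mp this
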